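/- Let θ, θ′ ∈ ℝ³ with θ₀ > √(θ₁²+θ₂²) and θ₀′ > √(θ₁′²+θ₂′²), and suppose additionally that 2θ′ − θ satisfies (2θ′−θ)₀ > √((2θ′−θ)₁² + (2θ′−θ)₂²). Then the Neyman chi-squared divergence (f(u) = (u−1)²) between the 2D hyperboloid distributions p_θ and p_{θ′} equals |θ′|²·exp(2|θ′|) / ( |θ|·|2θ′−θ|·exp(|θ| + |2θ′−θ|) ) − 1, where |η| = √(η₀²−η₁²−η₂²). -/

import Mathlib

open MeasureTheory

/-- The Minkowski inner product on ℝ³ (as ℝ × ℝ × ℝ). -/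
noncomputable def mink3 (θ η : ℝ × ℝ × ℝ) : ℝ :=
  θ.1 * η.1 - θ.2.1 * η.2.1 - θ.2.2 * η.2.2

/-- The Minkowski norm |θ| = √(θ₀²−θ₁²−θ₂²). -/
noncomputable def mnorm (θ : ℝ × ℝ × ℝ) : ℝ :=
  Real.sqrt (θ.1 ^ 2 - θ.2.1 ^ 2 - θ.2.2 ^ 2)

/-- The parameter space condition θ₀ > √(θ₁²+θ₂²). -/
def inHypParam (θ : ℝ × ℝ × ℝ) : Prop :=
  Real.sqrt (θ.2.1 ^ 2 + θ.2.2 ^ 2) < θ.1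

/-- The density of the 2D hyperboloid distribution on ℝ². -/
noncomputable def hypDensity2 (θ : ℝ × ℝ × ℝ) (x : ℝ × ℝ) : ℝ :=
  mnorm θ * Real.exp (mnorm θ) / (2 * Real.pi) *
    Real.exp (-(θ.1 * Real.sqrt (1 + x.1 ^ 2 + x.2 ^ 2) - θ.2.1 * x.1 - θ.2.2 * x.2)) /
      Real.sqrt (1 + x.1 ^ 2 + x.2 ^ 2)

/-- The f-divergence between two densities on ℝ². -/
noncomputable def fDivL (f : ℝ → ℝ) (p q : ℝ × ℝ → ℝ) : ℝ :=
  ∫ z : ℝ × ℝ, p z * f (q z / p z)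


open Set


/-- Key boost change-of-variables identity for 1D slices. -/
lemma hyp_slice (a c s : ℝ) (ha : 0 < a) (hc : c^2 < a^2) (hs : 0 < s) :
    (∫ y : ℝ, Real.exp (-(a * Real.sqrt (s^2+y^2) - c*y)) / Real.sqrt (s^2+y^2))
      = ∫ y : ℝ, Real.exp (-(Real.sqrt (a^2-c^2) * Real.sqrt (s^2+y^2))) / Real.sqrt (s^2+y^2) := by
  set m := Real.sqrt (a^2-c^2) with hmdef
  have hm0 : 0 < m := Real.sqrt_pos.mpr (by nlinarith)
  have hm2 : m^2 = a^2-c^2 := Real.sq_sqrt (by nlinarith)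
  have hw0 : ∀ t : ℝ, 0 < Real.sqrt (s^2+t^2) := fun t => Real.sqrt_pos.mpr (by positivity)
  have hw2 : ∀ t : ℝ, (Real.sqrt (s^2+t^2))^2 = s^2+t^2 := fun t => Real.sq_sqrt (by positivity)
  have hwt : ∀ t : ℝ, |t| < Real.sqrt (s^2+t^2) := by
    intro t
    have h1 : t^2 < s^2+t^2 := by nlinarith
    have h2 := Real.sqrt_lt_sqrt (sq_nonneg t) h1
    rwa [Real.sqrt_sq_eq_abs] at h2
  have hpos : ∀ (d : ℝ), d^2 = c^2 → ∀ t : ℝ, 0 < a * Real.sqrt (s^2+t^2) + d*t := by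
    intro d hd t
    have h1 : |d| ≤ a := by
      have h2 : Real.sqrt (d^2) ≤ Real.sqrt (a^2) := Real.sqrt_le_sqrt (by nlinarith)
      rwa [Real.sqrt_sq_eq_abs, Real.sqrt_sq ha.le] at h2
    have h2 : a * |t| < a * Real.sqrt (s^2+t^2) := mul_lt_mul_of_pos_left (hwt t) ha
    have h3 : |d| * |t| ≤ a * |t| := mul_le_mul_of_nonneg_right h1 (abs_nonneg t)
    have h4 : -(d*t) ≤ |d*t| := neg_le_abs _
    rw [abs_mul] at h4
    linarith
  have hkey : ∀ (d : ℝ), d^2 = c^2 → ∀ t : ℝ,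
      Real.sqrt (s^2 + ((a*t + d*Real.sqrt (s^2+t^2))/m)^2)
        = (a*Real.sqrt (s^2+t^2) + d*t)/m := by
    intro d hd t
    have h0 : m^2*s^2 + (a*t+d*Real.sqrt (s^2+t^2))^2
        = (a*Real.sqrt (s^2+t^2)+d*t)^2 := by
      linear_combination s^2*hm2 + s^2*hd + (d^2-a^2)*hw2 t
    have h1 : s^2 + ((a*t+d*Real.sqrt (s^2+t^2))/m)^2
        = ((a*Real.sqrt (s^2+t^2)+d*t)/m)^2 := by
      field_simp
      linear_combination h0
    rw [h1, Real.sqrt_sq (div_pos (hpos d hd t) hm0).le]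
  set f : ℝ → ℝ := fun t => (a*t + c*Real.sqrt (s^2+t^2))/m with hfdef
  set g : ℝ → ℝ := fun y => (a*y + (-c)*Real.sqrt (s^2+y^2))/m with hgdef
  have hgf : ∀ t : ℝ, g (f t) = t := by
    intro t
    have hk := hkey c rfl t
    show (a*(f t) + (-c)*Real.sqrt (s^2 + (f t)^2))/m = t
    have hft : f t = (a*t + c*Real.sqrt (s^2+t^2))/m := rfl
    rw [hft]
    rw [hk]
    field_simp
    linear_combination (-t)*hm2
  have hfg : ∀ y : ℝ, f (g y) = y := by
    intro y
    have hk := hkey (-c) (by ring) y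
    show (a*(g y) + c*Real.sqrt (s^2 + (g y)^2))/m = y
    have hgy : g y = (a*y + (-c)*Real.sqrt (s^2+y^2))/m := rfl
    rw [hgy]
    rw [hk]
    field_simp
    linear_combination (-y)*hm2
  have hderiv : ∀ t : ℝ, HasDerivAt f ((a + c*(t/Real.sqrt (s^2+t^2)))/m) t := by
    intro t
    have h1 : HasDerivAt (fun t : ℝ => s^2+t^2) (2*t) t := by
      simpa using (hasDerivAt_pow 2 t).const_add (s^2)
    have h2 : HasDerivAt (fun t : ℝ => Real.sqrt (s^2+t^2)) (t/Real.sqrt (s^2+t^2)) t := by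
      have h3 := (Real.hasDerivAt_sqrt (by positivity : s^2+t^2 ≠ 0)).comp t h1
      refine h3.congr_deriv ?_
      field_simp [(hw0 t).ne']
    have h5 : HasDerivAt (fun x : ℝ => (a*x + c*Real.sqrt (s^2+x^2))/m)
        ((a + c*(t/Real.sqrt (s^2+t^2)))/m) t := by
      have h6 := (((hasDerivAt_id t).const_mul a).add (h2.const_mul c)).div_const m
      simpa using h6
    exact h5
  have hinj : Function.Injective f := Function.LeftInverse.injective hgf
  have hsurj : Function.Surjective f := fun y => ⟨g y, hfg y⟩
  have himg : f '' Set.univ = Set.univ := by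
    rw [Set.image_univ]; exact hsurj.range_eq
  have hcv := integral_image_eq_integral_abs_deriv_smul (f := f)
      (f' := fun t => (a + c*(t/Real.sqrt (s^2+t^2)))/m) MeasurableSet.univ
      (fun t _ => (hderiv t).hasDerivWithinAt)
      hinj.injOn
      (fun x => Real.exp (-(a * Real.sqrt (s^2+x^2) - c*x)) / Real.sqrt (s^2+x^2))
  rw [himg, Measure.restrict_univ] at hcv
  rw [hcv]
  congr 1
  funext t
  have hk := hkey c rfl t
  have hft : f t = (a*t + c*Real.sqrt (s^2+t^2))/m := rfl
  set w := Real.sqrt (s^2+t^2) with hwdef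
  have hw : 0 < w := hw0 t
  have hawct : 0 < a*w + c*t := hpos c rfl t
  have hF : (a + c*(t/w))/m = (a*w + c*t)/(m*w) := by
    field_simp
  have hexp : a*((a*w + c*t)/m) - c*((a*t + c*w)/m) = m*w := by
    field_simp
    linear_combination (-w)*hm2
  rw [hft, hk, hexp, smul_eq_mul, hF,
    abs_of_pos (div_pos hawct (mul_pos hm0 hw))]
  field_simp


lemma integrable_exp_neg_abs {d : ℝ} (hd : 0 < d) :
    Integrable (fun x : ℝ => Real.exp (-(d * |x|))) := by
  have h1 : IntegrableOn (fun x : ℝ => Real.exp (-(d*|x|))) (Ioi 0) := by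
    refine (exp_neg_integrableOn_Ioi 0 hd).congr_fun (fun x hx => ?_) measurableSet_Ioi
    rw [abs_of_pos hx]; simp only [neg_mul]
  have h2 : IntegrableOn (fun x : ℝ => Real.exp (-(d*|x|))) (Iic 0) := by
    rw [IntegrableOn, ← Measure.map_neg_eq_self (volume : Measure ℝ)]
    have m : MeasurableEmbedding fun x : ℝ => -x := (Homeomorph.neg ℝ).measurableEmbedding
    rw [m.restrict_map, m.integrable_map_iff]
    simp only [Function.comp_def, abs_neg, neg_preimage, neg_Iic, neg_zero]
    exact Iff.mpr integrableOn_Ici_iff_integrableOn_Ioi h1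
  rw [← integrableOn_univ, ← Iic_union_Ioi (a := (0:ℝ))]
  exact h2.union h1

lemma hyp_integrable (a b c : ℝ) (h : Real.sqrt (b^2+c^2) < a) :
    Integrable (fun x : ℝ × ℝ =>
      Real.exp (-(a * Real.sqrt (1+x.1^2+x.2^2) - b*x.1 - c*x.2)) / Real.sqrt (1+x.1^2+x.2^2)) := by
  have ha : 0 < a := (Real.sqrt_nonneg _).trans_lt h
  have hB2 : (Real.sqrt (b^2+c^2))^2 = b^2+c^2 := Real.sq_sqrt (by positivity)
  set B := Real.sqrt (b^2+c^2) with hBdef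
  have hB0 : 0 ≤ B := Real.sqrt_nonneg _
  set ε := a - B with hε
  have hε0 : 0 < ε := by simp [hε]; linarith
  set d := ε/2 with hd
  have hd0 : 0 < d := by positivity
  have hw0 : ∀ x : ℝ × ℝ, 0 < Real.sqrt (1+x.1^2+x.2^2) :=
    fun x => Real.sqrt_pos.mpr (by positivity)
  have hw1 : ∀ x : ℝ × ℝ, 1 ≤ Real.sqrt (1+x.1^2+x.2^2) := by
    intro x
    calc (1:ℝ) = Real.sqrt 1 := Real.sqrt_one.symm
      _ ≤ _ := Real.sqrt_le_sqrt (by nlinarith [sq_nonneg x.1, sq_nonneg x.2])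
  have hw2 : ∀ x : ℝ × ℝ, (Real.sqrt (1+x.1^2+x.2^2))^2 = 1+x.1^2+x.2^2 :=
    fun x => Real.sq_sqrt (by positivity)
  -- the bound function
  have hbint : Integrable (fun x : ℝ × ℝ => Real.exp (-(d * |x.1|)) * Real.exp (-(d * |x.2|))) := by
    rw [MeasureTheory.Measure.volume_eq_prod]
    exact (integrable_exp_neg_abs hd0).mul_prod (integrable_exp_neg_abs hd0)
  have hcont : Continuous (fun x : ℝ × ℝ =>
      Real.exp (-(a * Real.sqrt (1+x.1^2+x.2^2) - b*x.1 - c*x.2)) / Real.sqrt (1+x.1^2+x.2^2)) := by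
    apply Continuous.div
    · fun_prop
    · fun_prop
    · exact fun x => (hw0 x).ne'
  apply hbint.mono' hcont.aestronglyMeasurable
  refine Filter.Eventually.of_forall (fun x => ?_)
  set w := Real.sqrt (1+x.1^2+x.2^2) with hwdef
  have hWw : Real.sqrt (x.1^2+x.2^2) ≤ w := Real.sqrt_le_sqrt (by linarith)
  have hcauchy : b*x.1 + c*x.2 ≤ B * Real.sqrt (x.1^2+x.2^2) := by
    have hW2 : (Real.sqrt (x.1^2+x.2^2))^2 = x.1^2+x.2^2 := Real.sq_sqrt (by positivity)
    have hW0 : 0 ≤ Real.sqrt (x.1^2+x.2^2) := Real.sqrt_nonneg _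
    have h2 : (b*x.1+c*x.2)^2 ≤ (B * Real.sqrt (x.1^2+x.2^2))^2 := by
      rw [mul_pow, hB2, hW2]
      nlinarith [sq_nonneg (b*x.2 - c*x.1)]
    calc b*x.1+c*x.2 ≤ |b*x.1+c*x.2| := le_abs_self _
      _ ≤ B * Real.sqrt (x.1^2+x.2^2) := by
          rw [← Real.sqrt_sq_eq_abs, ← Real.sqrt_sq (by positivity : (0:ℝ) ≤ B * Real.sqrt (x.1^2+x.2^2))]
          exact Real.sqrt_le_sqrt h2
  have habs : d*|x.1| + d*|x.2| ≤ a*w - b*x.1 - c*x.2 := by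
    have h3 : B * Real.sqrt (x.1^2+x.2^2) ≤ B * w := mul_le_mul_of_nonneg_left hWw hB0
    have h4 : (|x.1|+|x.2|)/2 ≤ w := by
      rw [show w = Real.sqrt ((Real.sqrt (1+x.1^2+x.2^2))^2) from (Real.sqrt_sq (hw0 x).le).symm,
        hw2]
      rw [show (|x.1|+|x.2|)/2 = Real.sqrt (((|x.1|+|x.2|)/2)^2) from
        (Real.sqrt_sq (by positivity)).symm]
      apply Real.sqrt_le_sqrt
      nlinarith [sq_nonneg (|x.1| - |x.2|), sq_abs x.1, sq_abs x.2]
    have h5 : ε * ((|x.1|+|x.2|)/2) ≤ ε * w := mul_le_mul_of_nonneg_left h4 hε0.le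
    have h6 : ε * w ≤ a*w - b*x.1 - c*x.2 := by
      have : b*x.1 + c*x.2 ≤ B*w := le_trans hcauchy h3
      simp only [hε]
      nlinarith
    calc d*|x.1| + d*|x.2| = ε * ((|x.1|+|x.2|)/2) := by rw [hd]; ring
      _ ≤ ε * w := h5
      _ ≤ a*w - b*x.1 - c*x.2 := h6
  have hnn : 0 ≤ Real.exp (-(a*w - b*x.1 - c*x.2))/w := by positivity
  rw [Real.norm_eq_abs, abs_of_nonneg hnn]
  calc Real.exp (-(a*w - b*x.1 - c*x.2))/w ≤ Real.exp (-(a*w - b*x.1 - c*x.2)) := by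
        apply div_le_self (Real.exp_nonneg _) (hw1 x)
    _ ≤ Real.exp (-(d*|x.1| + d*|x.2|)) := by
        apply Real.exp_le_exp.mpr
        simp only [neg_le_neg_iff]
        linarith
    _ = Real.exp (-(d * |x.1|)) * Real.exp (-(d * |x.2|)) := by
        rw [← Real.exp_add]; ring_nf

noncomputable def hypKint (a b c : ℝ) : ℝ :=
  ∫ x : ℝ × ℝ, Real.exp (-(a * Real.sqrt (1+x.1^2+x.2^2) - b*x.1 - c*x.2)) / Real.sqrt (1+x.1^2+x.2^2)

lemma hyp_reduce (a b c : ℝ) (h : Real.sqrt (b^2+c^2) < a) :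
    hypKint a b c = hypKint (Real.sqrt (a^2-c^2)) b 0 := by
  have ha : 0 < a := (Real.sqrt_nonneg _).trans_lt h
  have hbc : b^2+c^2 < a^2 := by
    nlinarith [Real.sq_sqrt (show (0:ℝ) ≤ b^2+c^2 by positivity), Real.sqrt_nonneg (b^2+c^2)]
  set A := Real.sqrt (a^2-c^2) with hAdef
  have hA2 : A^2 = a^2-c^2 := Real.sq_sqrt (by nlinarith)
  have hA0 : 0 < A := Real.sqrt_pos.mpr (by nlinarith)
  have h2 : Real.sqrt (b^2+0^2) < A := by
    rw [hAdef]
    exact Real.sqrt_lt_sqrt (by positivity) (by nlinarith)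
  have hi1 := hyp_integrable a b c h
  have hi2 := hyp_integrable A b 0 h2
  rw [MeasureTheory.Measure.volume_eq_prod] at hi1 hi2
  have key : ∀ x : ℝ,
      (∫ y : ℝ, Real.exp (-(a * Real.sqrt (1+x^2+y^2) - b*x - c*y)) / Real.sqrt (1+x^2+y^2))
        = ∫ y : ℝ, Real.exp (-(A * Real.sqrt (1+x^2+y^2) - b*x - 0*y)) / Real.sqrt (1+x^2+y^2) := by
    intro x
    set s := Real.sqrt (1+x^2) with hsdef
    have hs0 : 0 < s := Real.sqrt_pos.mpr (by positivity)
    have hs2 : s^2 = 1+x^2 := Real.sq_sqrt (by positivity)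
    have hw : ∀ y : ℝ, Real.sqrt (1+x^2+y^2) = Real.sqrt (s^2+y^2) := by
      intro y; rw [hs2]
    calc (∫ y : ℝ, Real.exp (-(a * Real.sqrt (1+x^2+y^2) - b*x - c*y)) / Real.sqrt (1+x^2+y^2))
        = ∫ y : ℝ, Real.exp (b*x) * (Real.exp (-(a * Real.sqrt (s^2+y^2) - c*y)) / Real.sqrt (s^2+y^2)) := by
          congr 1
          funext y
          rw [hw y, ← mul_div_assoc, ← Real.exp_add]
          congr 2
          ring
      _ = Real.exp (b*x) * ∫ y : ℝ, Real.exp (-(a * Real.sqrt (s^2+y^2) - c*y)) / Real.sqrt (s^2+y^2) :=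
          integral_const_mul _ _
      _ = Real.exp (b*x) * ∫ y : ℝ, Real.exp (-(A * Real.sqrt (s^2+y^2))) / Real.sqrt (s^2+y^2) := by
          rw [hyp_slice a c s ha (by nlinarith) hs0]
      _ = ∫ y : ℝ, Real.exp (b*x) * (Real.exp (-(A * Real.sqrt (s^2+y^2))) / Real.sqrt (s^2+y^2)) :=
          (integral_const_mul _ _).symm
      _ = ∫ y : ℝ, Real.exp (-(A * Real.sqrt (1+x^2+y^2) - b*x - 0*y)) / Real.sqrt (1+x^2+y^2) := by
          congr 1
          funext y
          rw [hw y, ← mul_div_assoc, ← Real.exp_add]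
          congr 2
          ring
  rw [hypKint, hypKint, MeasureTheory.Measure.volume_eq_prod,
    integral_prod _ hi1, integral_prod _ hi2]
  congr 1
  funext x
  simpa using key x

lemma hyp_swap (a b c : ℝ) : hypKint a b c = hypKint a c b := by
  rw [hypKint, hypKint, MeasureTheory.Measure.volume_eq_prod, ← integral_prod_swap]
  congr 1
  funext z
  simp only [Prod.fst_swap, Prod.snd_swap]
  rw [show (1+z.2^2+z.1^2 : ℝ) = 1+z.1^2+z.2^2 from by ring]
  congr 2
  ring

lemma hyp_polar (m : ℝ) (hm : 0 < m) :
    hypKint m 0 0 = 2*Real.pi*Real.exp (-m)/m := by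
  have h0 : (fun x : ℝ × ℝ => Real.exp (-(m * Real.sqrt (1+x.1^2+x.2^2) - 0*x.1 - 0*x.2)) / Real.sqrt (1+x.1^2+x.2^2))
      = fun x : ℝ × ℝ => Real.exp (-(m * Real.sqrt (1+x.1^2+x.2^2))) / Real.sqrt (1+x.1^2+x.2^2) := by
    funext x; congr 2; ring
  rw [hypKint, h0, ← integral_comp_polarCoord_symm]
  have h1 : ∀ p : ℝ × ℝ,
      p.1 • ((fun x : ℝ × ℝ => Real.exp (-(m * Real.sqrt (1+x.1^2+x.2^2))) / Real.sqrt (1+x.1^2+x.2^2)) (polarCoord.symm p))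
        = (p.1 * Real.exp (-(m * Real.sqrt (1+p.1^2))) / Real.sqrt (1+p.1^2)) * (1 : ℝ) := by
    intro p
    have h2 : 1+(p.1 * Real.cos p.2)^2+(p.1 * Real.sin p.2)^2 = 1+p.1^2 := by
      have := Real.sin_sq_add_cos_sq p.2
      linear_combination p.1^2 * this
    simp only [polarCoord_symm_apply, smul_eq_mul, mul_one]
    rw [h2]
    ring
  rw [MeasureTheory.integral_congr_ae (Filter.Eventually.of_forall fun p => h1 p)]
  rw [polarCoord_target, MeasureTheory.Measure.volume_eq_prod, ← Measure.prod_restrict,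
    MeasureTheory.integral_prod_mul (L := ℝ)
      (fun r : ℝ => r * Real.exp (-(m * Real.sqrt (1+r^2))) / Real.sqrt (1+r^2))
      (fun _ : ℝ => (1:ℝ))]
  have hIoo : (∫ _ in Ioo (-Real.pi) Real.pi, (1:ℝ)) = 2*Real.pi := by
    rw [setIntegral_const, Real.volume_real_Ioo_of_le (by linarith [Real.pi_pos]), smul_eq_mul, mul_one]
    ring
  rw [hIoo]
  -- radial integral via u = sqrt(1+r^2)
  have hderiv : ∀ r ∈ Ioi (0:ℝ), HasDerivWithinAt (fun r : ℝ => Real.sqrt (1+r^2))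
      (r / Real.sqrt (1+r^2)) (Ioi 0) r := by
    intro r _
    have h1 : HasDerivAt (fun r : ℝ => 1+r^2) (2*r) r := by
      simpa using (hasDerivAt_pow 2 r).const_add (1:ℝ)
    have h2 := (Real.hasDerivAt_sqrt (by positivity : (1:ℝ)+r^2 ≠ 0)).comp r h1
    have h3 : HasDerivAt (fun r : ℝ => Real.sqrt (1+r^2)) (r / Real.sqrt (1+r^2)) r := by
      refine h2.congr_deriv ?_
      have : Real.sqrt (1+r^2) ≠ 0 := (Real.sqrt_pos.mpr (by positivity)).ne'
      field_simp
    exact h3.hasDerivWithinAt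
  have hinj : InjOn (fun r : ℝ => Real.sqrt (1+r^2)) (Ioi 0) := by
    intro r1 h1 r2 h2 he
    simp only at he
    have e1 : (1:ℝ)+r1^2 = 1+r2^2 := by
      have a1 := Real.sq_sqrt (show (0:ℝ) ≤ 1+r1^2 by positivity)
      have a2 := Real.sq_sqrt (show (0:ℝ) ≤ 1+r2^2 by positivity)
      rw [← a1, ← a2, he]
    have e2 : r1^2 = r2^2 := by linarith
    calc r1 = Real.sqrt (r1^2) := (Real.sqrt_sq (le_of_lt h1)).symm
      _ = Real.sqrt (r2^2) := by rw [e2]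
      _ = r2 := Real.sqrt_sq (le_of_lt h2)
  have himg : (fun r : ℝ => Real.sqrt (1+r^2)) '' (Ioi 0) = Ioi 1 := by
    ext u
    simp only [mem_image, mem_Ioi]
    constructor
    · rintro ⟨r, hr, rfl⟩
      calc (1:ℝ) = Real.sqrt 1 := Real.sqrt_one.symm
        _ < Real.sqrt (1+r^2) := Real.sqrt_lt_sqrt (by norm_num) (by nlinarith)
    · intro hu
      refine ⟨Real.sqrt (u^2-1), Real.sqrt_pos.mpr (by nlinarith), ?_⟩
      rw [Real.sq_sqrt (by nlinarith : (0:ℝ) ≤ u^2-1)]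
      rw [show (1:ℝ)+(u^2-1) = u^2 from by ring]
      exact Real.sqrt_sq (by linarith)
  have hcv := integral_image_eq_integral_abs_deriv_smul measurableSet_Ioi hderiv hinj
      (fun u => Real.exp (-(m*u)))
  rw [himg] at hcv
  have hptw : ∀ r ∈ Ioi (0:ℝ),
      |r / Real.sqrt (1+r^2)| • Real.exp (-(m * Real.sqrt (1+r^2)))
        = r * Real.exp (-(m * Real.sqrt (1+r^2))) / Real.sqrt (1+r^2) := by
    intro r hr
    have hw : 0 < Real.sqrt (1+r^2) := Real.sqrt_pos.mpr (by positivity)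
    rw [abs_of_pos (div_pos hr hw), smul_eq_mul]
    ring
  rw [setIntegral_congr_fun measurableSet_Ioi hptw] at hcv
  rw [← hcv]
  have hval : (∫ u in Ioi (1:ℝ), Real.exp (-(m*u))) = m⁻¹ * Real.exp (-m) := by
    have h4 := integral_comp_mul_right_Ioi (fun v => Real.exp (-v)) 1 hm
    simp only [one_mul, smul_eq_mul] at h4
    rw [show (fun u : ℝ => Real.exp (-(m*u))) = fun u : ℝ => Real.exp (-(u*m)) from
      funext fun u => by rw [mul_comm], h4, integral_exp_neg_Ioi]
  rw [hval]
  field_simp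

lemma hyp_value (a b c : ℝ) (h : Real.sqrt (b^2+c^2) < a) :
    hypKint a b c = 2*Real.pi*Real.exp (-Real.sqrt (a^2-b^2-c^2))/Real.sqrt (a^2-b^2-c^2) := by
  have ha : 0 < a := (Real.sqrt_nonneg _).trans_lt h
  have hbc : b^2+c^2 < a^2 := by
    nlinarith [Real.sq_sqrt (show (0:ℝ) ≤ b^2+c^2 by positivity), Real.sqrt_nonneg (b^2+c^2)]
  have hA2 : (Real.sqrt (a^2-c^2))^2 = a^2-c^2 := Real.sq_sqrt (by nlinarith)
  have h3 : Real.sqrt (0^2+b^2) < Real.sqrt (a^2-c^2) :=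
    Real.sqrt_lt_sqrt (by positivity) (by nlinarith)
  have hm : 0 < Real.sqrt (a^2-b^2-c^2) := Real.sqrt_pos.mpr (by nlinarith)
  rw [hyp_reduce a b c h, hyp_swap, hyp_reduce _ 0 b h3, hA2,
    show a^2-c^2-b^2 = a^2-b^2-c^2 from by ring, hyp_polar _ hm]

lemma mnorm_pos (θ : ℝ × ℝ × ℝ) (hθ : inHypParam θ) : 0 < mnorm θ := by
  have h := hθ
  rw [inHypParam] at h
  have h1 : θ.2.1^2 + θ.2.2^2 < θ.1^2 := by
    nlinarith [Real.sq_sqrt (show (0:ℝ) ≤ θ.2.1^2+θ.2.2^2 by positivity),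
      Real.sqrt_nonneg (θ.2.1^2+θ.2.2^2)]
  exact Real.sqrt_pos.mpr (by nlinarith)

lemma hypDensity2_eq (θ : ℝ × ℝ × ℝ) :
    hypDensity2 θ = fun x : ℝ × ℝ => mnorm θ * Real.exp (mnorm θ) / (2 * Real.pi) *
      (Real.exp (-(θ.1 * Real.sqrt (1+x.1^2+x.2^2) - θ.2.1*x.1 - θ.2.2*x.2)) /
        Real.sqrt (1+x.1^2+x.2^2)) := by
  funext x
  rw [hypDensity2, mul_div_assoc]

lemma hypDensity2_integrable (θ : ℝ × ℝ × ℝ) (hθ : inHypParam θ) :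
    Integrable (hypDensity2 θ) := by
  rw [hypDensity2_eq]
  exact (hyp_integrable θ.1 θ.2.1 θ.2.2 hθ).const_mul _

lemma hypDensity2_integral (θ : ℝ × ℝ × ℝ) (hθ : inHypParam θ) :
    ∫ x : ℝ × ℝ, hypDensity2 θ x = 1 := by
  have hm : 0 < mnorm θ := mnorm_pos θ hθ
  have hv := hyp_value θ.1 θ.2.1 θ.2.2 hθ
  rw [hypKint] at hv
  rw [hypDensity2_eq, integral_const_mul, hv]
  rw [show Real.sqrt (θ.1^2 - θ.2.1^2 - θ.2.2^2) = mnorm θ from rfl]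
  have hπ : (0:ℝ) < Real.pi := Real.pi_pos
  have he : Real.exp (mnorm θ) * Real.exp (-(mnorm θ)) = 1 := by
    rw [← Real.exp_add]; simp
  field_simp
  linear_combination he

lemma hypDensity2_pos (θ : ℝ × ℝ × ℝ) (hθ : inHypParam θ) (x : ℝ × ℝ) :
    0 < hypDensity2 θ x := by
  have hm : 0 < mnorm θ := mnorm_pos θ hθ
  have hπ : (0:ℝ) < Real.pi := Real.pi_pos
  have hw : 0 < Real.sqrt (1+x.1^2+x.2^2) := Real.sqrt_pos.mpr (by positivity)
  rw [hypDensity2]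
  positivity

/-- closed form of the Neyman chi-squared divergence (f(u) = (u−1)²)
between two 2D hyperboloid distributions, assuming 2θ′ − θ lies in the parameter space. -/
theorem neyman_chisq_hyperboloid2 (θ θ' : ℝ × ℝ × ℝ)
    (hθ : inHypParam θ) (hθ' : inHypParam θ') (h2 : inHypParam ((2 : ℝ) • θ' - θ)) :
    fDivL (fun u => (u - 1) ^ 2) (hypDensity2 θ) (hypDensity2 θ') =
      mnorm θ' ^ 2 * Real.exp (2 * mnorm θ') /
        (mnorm θ * mnorm ((2 : ℝ) • θ' - θ) *
          Real.exp (mnorm θ + mnorm ((2 : ℝ) • θ' - θ))) - 1 := by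
  set η : ℝ × ℝ × ℝ := (2 : ℝ) • θ' - θ with hηdef
  have hη1 : η.1 = 2*θ'.1 - θ.1 := by simp [hηdef]
  have hη21 : η.2.1 = 2*θ'.2.1 - θ.2.1 := by simp [hηdef]
  have hη22 : η.2.2 = 2*θ'.2.2 - θ.2.2 := by simp [hηdef]
  have hmθ : 0 < mnorm θ := mnorm_pos θ hθ
  have hmθ' : 0 < mnorm θ' := mnorm_pos θ' hθ'
  have hmη : 0 < mnorm η := mnorm_pos η h2
  have hπ : (0:ℝ) < Real.pi := Real.pi_pos
  set C : ℝ := mnorm θ' ^ 2 * Real.exp (2 * mnorm θ') /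
      (mnorm θ * mnorm η * Real.exp (mnorm θ + mnorm η)) with hC
  have hpt : ∀ z : ℝ × ℝ, hypDensity2 θ z * ((hypDensity2 θ' z / hypDensity2 θ z) - 1)^2
      = C * hypDensity2 η z - 2 * hypDensity2 θ' z + hypDensity2 θ z := by
    intro z
    have hp := hypDensity2_pos θ hθ z
    have hexpand : hypDensity2 θ z * ((hypDensity2 θ' z / hypDensity2 θ z) - 1)^2
        = hypDensity2 θ' z ^2 / hypDensity2 θ z - 2*hypDensity2 θ' z + hypDensity2 θ z := by
      field_simp
      ring
    rw [hexpand]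
    have hqp : hypDensity2 θ' z ^2 / hypDensity2 θ z = C * hypDensity2 η z := by
      rw [hypDensity2, hypDensity2, hypDensity2]
      set w := Real.sqrt (1+z.1^2+z.2^2) with hw
      have hw0 : 0 < w := Real.sqrt_pos.mpr (by positivity)
      set A := Real.exp (-(θ.1 * w - θ.2.1*z.1 - θ.2.2*z.2)) with hA
      set A' := Real.exp (-(θ'.1 * w - θ'.2.1*z.1 - θ'.2.2*z.2)) with hA'
      set Aη := Real.exp (-(η.1 * w - η.2.1*z.1 - η.2.2*z.2)) with hAη
      have hA0 : 0 < A := Real.exp_pos _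
      have hAsq : A'^2 = Aη * A := by
        rw [hA', hAη, hA, ← Real.exp_add, sq, ← Real.exp_add]
        congr 1
        rw [hη1, hη21, hη22]
        ring
      set Cθ := mnorm θ * Real.exp (mnorm θ) / (2*Real.pi) with hCθ
      set Cθ' := mnorm θ' * Real.exp (mnorm θ') / (2*Real.pi) with hCθ'
      set Cη := mnorm η * Real.exp (mnorm η) / (2*Real.pi) with hCη
      have hCθ0 : 0 < Cθ := by rw [hCθ]; positivity
      have hCη0 : 0 < Cη := by rw [hCη]; positivity
      have hconst : Cθ'^2/Cθ = C * Cη := by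
        rw [hCθ, hCθ', hCη, hC, Real.exp_add,
          show (2:ℝ)*mnorm θ' = mnorm θ' + mnorm θ' from two_mul _, Real.exp_add]
        field_simp
      have e1 : (Cθ' * A'/w)^2 / (Cθ * A/w) = (Cθ'^2/Cθ) * ((A'^2/A)/w) := by
        field_simp
      have e2 : A'^2/A = Aη := by
        rw [hAsq, mul_div_assoc, div_self hA0.ne', mul_one]
      rw [e1, e2, hconst]
      ring
    rw [hqp]
  have hi_η : Integrable (fun z : ℝ × ℝ => C * hypDensity2 η z) :=
    (hypDensity2_integrable η h2).const_mul C
  have hi_q : Integrable (fun z : ℝ × ℝ => 2 * hypDensity2 θ' z) :=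
    (hypDensity2_integrable θ' hθ').const_mul 2
  have hi_p : Integrable (hypDensity2 θ) := hypDensity2_integrable θ hθ
  rw [fDivL]
  rw [show (fun z : ℝ × ℝ => hypDensity2 θ z * (hypDensity2 θ' z / hypDensity2 θ z - 1)^2)
      = (fun z : ℝ × ℝ => C * hypDensity2 η z - 2 * hypDensity2 θ' z + hypDensity2 θ z) from
    funext hpt]
  have hi_sub : Integrable (fun z : ℝ × ℝ => C * hypDensity2 η z - 2 * hypDensity2 θ' z) :=
    hi_η.sub hi_q
  rw [integral_add (f := fun z : ℝ × ℝ => C * hypDensity2 η z - 2 * hypDensity2 θ' z)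
      (g := hypDensity2 θ) hi_sub hi_p,
    integral_sub hi_η hi_q,
    integral_const_mul, integral_const_mul,
    hypDensity2_integral η h2, hypDensity2_integral θ' hθ', hypDensity2_integral θ hθ]
  ring
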